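/- Let m ≥ 3 and let q ∈ ℂ be a primitive m-th root of unity. Let λ ∈ ℂ, λ ≠ 0, and α, β ∈ ℂ be such that c_p = (p)_q·(λ² q^{1−p} − λ^{−2} q^{p−1})/(q − q^{−1}) + αβ ≠ 0 for every integer 1 ≤ p ≤ m−1. Then M(λ, α, β) is an irreducible representation of U_q(sl(2)) of dimension m: the only linear subspaces of ℂ^m invariant under its three matrices K, E, F are {0} and ℂ^m. -/

import Mathlib

open Matrix

noncomputable section

/-- The q-integer `(p)_q = (q^p - q^{-p})/(q - q⁻¹)`. -/
def qint (q : ℂ) (p : ℤ) : ℂ := (q ^ p - q ^ (-p)) / (q - q⁻¹)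

/-- A representation of `U_q(sl(2))` of dimension `N`: a triple `(K, E, F)` of `N×N`
complex matrices with `K` invertible satisfying the defining relations. -/
def IsRep (q : ℂ) {N : ℕ} (K E F : Matrix (Fin N) (Fin N) ℂ) : Prop :=
  IsUnit K ∧
  K * E * K⁻¹ = q • E ∧
  K * F * K⁻¹ = q⁻¹ • F ∧
  E * F - F * E = (q - q⁻¹)⁻¹ • (K ^ 2 - K⁻¹ ^ 2)

/-- A subspace invariant under the three matrices `K`, `E`, `F`. -/
def InvariantSub {N : ℕ} (K E F : Matrix (Fin N) (Fin N) ℂ)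
    (W : Submodule ℂ (Fin N → ℂ)) : Prop :=
  (∀ v ∈ W, K.mulVec v ∈ W) ∧ (∀ v ∈ W, E.mulVec v ∈ W) ∧ (∀ v ∈ W, F.mulVec v ∈ W)

/-- An irreducible representation of `U_q(sl(2))` of dimension `N`. -/
def IsIrrep (q : ℂ) {N : ℕ} (K E F : Matrix (Fin N) (Fin N) ℂ) : Prop :=
  IsRep q K E F ∧ 1 ≤ N ∧
  ∀ W : Submodule ℂ (Fin N → ℂ), InvariantSub K E F W → W = ⊥ ∨ W = ⊤

/-- The coefficient `c_p = (p)_q(λ² q^{1−p} − λ⁻² q^{p−1})/(q − q⁻¹) + αβ`. -/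
def cCoeff (q lam α β : ℂ) (p : ℕ) : ℂ :=
  qint q p *
    ((lam ^ 2 * q ^ (1 - (p : ℤ)) - (lam⁻¹) ^ 2 * q ^ ((p : ℤ) - 1)) / (q - q⁻¹)) +
  α * β

/-- The `K` matrix of the module `M(λ, α, β)`: `K·v_p = λ q^{-p} v_p`. -/
def MK (q lam : ℂ) (m : ℕ) : Matrix (Fin m) (Fin m) ℂ :=
  Matrix.diagonal fun p => lam * q ^ (-(p : ℤ))

/-- The `F` matrix of `M(λ, α, β)`: `F·v_p = v_{p+1}` for `p ≤ m−2`, `F·v_{m−1} = α·v_0`. -/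
def MF (α : ℂ) (m : ℕ) : Matrix (Fin m) (Fin m) ℂ :=
  Matrix.of fun i j =>
    if (i : ℕ) = (j : ℕ) + 1 then 1
    else if (j : ℕ) = m - 1 ∧ (i : ℕ) = 0 then α
    else 0

/-- The `E` matrix of `M(λ, α, β)`: `E·v_0 = β·v_{m−1}` and `E·v_p = c_p·v_{p−1}`
for `1 ≤ p ≤ m−1`. -/
def ME (q lam α β : ℂ) (m : ℕ) : Matrix (Fin m) (Fin m) ℂ :=
  Matrix.of fun i j =>
    if (j : ℕ) = (i : ℕ) + 1 then cCoeff q lam α β (j : ℕ)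
    else if (j : ℕ) = 0 ∧ (i : ℕ) = m - 1 then β
    else 0

lemma cCoeff_zero (q lam α β : ℂ) : cCoeff q lam α β 0 = α * β := by
  simp [cCoeff, qint]

lemma cCoeff_m (q lam α β : ℂ) (m : ℕ) (hqm : q ^ m = 1) : cCoeff q lam α β m = α * β := by
  have h : (q:ℂ) ^ ((m:ℕ):ℤ) = 1 := by rw [zpow_natCast, hqm]
  simp [cCoeff, qint, _root_.zpow_neg, h]

lemma cdiff (q lam α β : ℂ) (hq0 : q ≠ 0) (hqq : q - q⁻¹ ≠ 0) (hlam : lam ≠ 0) (p : ℕ) :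
    cCoeff q lam α β (p+1) - cCoeff q lam α β p =
      (q - q⁻¹)⁻¹ * ((lam * q ^ (-(p:ℤ)))^2 - ((lam * q ^ (-(p:ℤ)))⁻¹)^2) := by
  have ht : (q:ℂ) ^ (p:ℤ) ≠ 0 := zpow_ne_zero _ hq0
  have hq21 : q^2 - 1 ≠ 0 := by
    intro h
    apply hqq
    field_simp
    linear_combination h
  unfold cCoeff qint
  have e1 : ((p+1:ℕ):ℤ) = (p:ℤ)+1 := by push_cast; ring
  rw [e1]
  have h1 : q ^ ((p:ℤ)+1) = q ^ (p:ℤ) * q := by rw [zpow_add₀ hq0, zpow_one]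
  have h2 : q ^ (-((p:ℤ)+1)) = (q ^ (p:ℤ) * q)⁻¹ := by rw [_root_.zpow_neg, h1]
  have h3 : q ^ (-(p:ℤ)) = (q ^ (p:ℤ))⁻¹ := by rw [_root_.zpow_neg]
  have h4 : q ^ (1-((p:ℤ)+1)) = (q ^ (p:ℤ))⁻¹ := by
    rw [show (1-((p:ℤ)+1)) = -(p:ℤ) by ring, _root_.zpow_neg]
  have h5 : q ^ ((p:ℤ)+1-1) = q ^ (p:ℤ) := by rw [show ((p:ℤ)+1-1) = (p:ℤ) by ring]
  have h6 : q ^ (1-(p:ℤ)) = q * (q ^ (p:ℤ))⁻¹ := by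
    rw [sub_eq_add_neg, zpow_add₀ hq0, zpow_one, _root_.zpow_neg]
  have h7 : q ^ ((p:ℤ)-1) = q ^ (p:ℤ) * q⁻¹ := by
    rw [sub_eq_add_neg, zpow_add₀ hq0, _root_.zpow_neg, zpow_one]
  rw [h1, h2, h3, h4, h5, h6, h7]
  generalize hgt : (q:ℂ) ^ (p:ℤ) = t at ht ⊢
  field_simp
  have hA : t ^ 2 * q * lam ^ 2 - t ^ 2 * q ^ 3 * lam ^ 2 * 2 + t ^ 2 * q ^ 5 * lam ^ 2 ≠ 0 := by
    have e : t ^ 2 * q * lam ^ 2 - t ^ 2 * q ^ 3 * lam ^ 2 * 2 + t ^ 2 * q ^ 5 * lam ^ 2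
        = t ^ 2 * q * lam ^ 2 * (q ^ 2 - 1) ^ 2 := by ring
    rw [e]
    exact mul_ne_zero (mul_ne_zero (mul_ne_zero (pow_ne_zero _ ht) hq0) (pow_ne_zero _ hlam)) (pow_ne_zero _ hq21)
  have hB : t ^ 2 * q ^ 2 * lam ^ 2 - t ^ 2 * lam ^ 2 ≠ 0 := by
    have e : t ^ 2 * q ^ 2 * lam ^ 2 - t ^ 2 * lam ^ 2 = t ^ 2 * lam ^ 2 * (q ^ 2 - 1) := by ring
    rw [e]
    exact mul_ne_zero (mul_ne_zero (pow_ne_zero _ ht) (pow_ne_zero _ hlam)) hq21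
  have hqq1 : q * q - 1 ≠ 0 := fun h => hq21 (by linear_combination h)
  have hD1 : t * q * (q * q - 1) * (t * lam ^ 2 * (q * q - 1)) ≠ 0 :=
    mul_ne_zero (mul_ne_zero (mul_ne_zero ht hq0) hqq1)
      (mul_ne_zero (mul_ne_zero ht (pow_ne_zero _ hlam)) hqq1)
  have hD2 : t * (q * q - 1) * (t * (lam ^ 2 * q) * (q * q - 1)) ≠ 0 :=
    mul_ne_zero (mul_ne_zero ht hqq1)
      (mul_ne_zero (mul_ne_zero ht (mul_ne_zero (pow_ne_zero _ hlam) hq0)) hqq1)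
  have hD3 : (q * q - 1) * (t ^ 2 * lam ^ 2) ≠ 0 :=
    mul_ne_zero hqq1 (mul_ne_zero (pow_ne_zero _ ht) (pow_ne_zero _ hlam))
  ring


lemma mulVecSingleOne {N : ℕ} (A : Matrix (Fin N) (Fin N) ℂ) (j : Fin N) :
    A.mulVec (Pi.single j 1) = fun i => A i j := by
  funext i
  simp [Matrix.mulVec, dotProduct, Pi.single_apply, mul_ite, Finset.sum_ite_eq]

/-- If `c_p ≠ 0` for all `1 ≤ p ≤ m−1`, then `M(λ, α, β)` is an irreducible representation
of `U_q(sl(2))` of dimension `m`. -/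
theorem stmt14 (m : ℕ) (hm : 3 ≤ m) (q : ℂ) (hq : IsPrimitiveRoot q m)
    (lam α β : ℂ) (hlam : lam ≠ 0)
    (hc : ∀ p : ℕ, 1 ≤ p → p ≤ m - 1 → cCoeff q lam α β p ≠ 0) :
    IsIrrep q (MK q lam m) (ME q lam α β m) (MF α m) := by
  refine ⟨?_, by omega, ?_⟩
  · -- IsRep
    have hq0 : q ≠ 0 := hq.ne_zero (by omega)
    have hqm : q ^ m = 1 := hq.pow_eq_one
    have hq2 : q ^ 2 ≠ 1 := hq.pow_ne_one_of_pos_of_lt (by norm_num) (by omega)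
    have hqq : q - q⁻¹ ≠ 0 := by
      intro h
      apply hq2
      have : q * (q - q⁻¹) = q ^ 2 - 1 := by field_simp
      have h2 : q ^ 2 - 1 = 0 := by rw [← this, h, mul_zero]
      linear_combination h2
    have hqmz : q ^ (-(m:ℤ)) = 1 := by
      rw [_root_.zpow_neg, zpow_natCast, hqm, inv_one]
    set d : Fin m → ℂ := fun p => lam * q ^ (-((p:ℕ):ℤ)) with hdd
    have hMK : MK q lam m = Matrix.diagonal d := rfl
    have hdval : ∀ p : Fin m, d p = lam * q ^ (-((p:ℕ):ℤ)) := fun p => rfl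
    have hd0 : ∀ i, d i ≠ 0 := fun i => mul_ne_zero hlam (zpow_ne_zero _ hq0)
    have hKinv : (MK q lam m)⁻¹ = Matrix.diagonal (fun i => (d i)⁻¹) := by
      apply Matrix.inv_eq_right_inv
      rw [hMK, Matrix.diagonal_mul_diagonal]
      have : (fun i => d i * (d i)⁻¹) = fun _ : Fin m => (1:ℂ) := by
        funext i; exact mul_inv_cancel₀ (hd0 i)
      rw [this, Matrix.diagonal_one]
    clear_value d
    refine ⟨?_, ?_, ?_, ?_⟩
    · rw [Matrix.isUnit_iff_isUnit_det, hMK, Matrix.det_diagonal]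
      exact isUnit_iff_ne_zero.mpr (Finset.prod_ne_zero_iff.mpr fun i _ => hd0 i)
    · -- K E K⁻¹ = q • E
      ext i j
      rw [hKinv, hMK]
      simp only [Matrix.mul_diagonal, Matrix.diagonal_mul, Matrix.smul_apply, smul_eq_mul]
      have hkey : ∀ h : ME q lam α β m i j ≠ 0, d i = q * d j := by
        intro h
        simp only [ME, Matrix.of_apply] at h
        split_ifs at h with h1 h2
        · rw [hdval i, hdval j, show (-((i:ℕ):ℤ)) = 1 + (-((j:ℕ):ℤ)) by omega,
            zpow_add₀ hq0, zpow_one]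
          ring
        · have hi := i.isLt
          rw [hdval i, hdval j, show (-((i:ℕ):ℤ)) = 1 + (-(m:ℤ)) by omega,
            show (-((j:ℕ):ℤ)) = 0 by omega, zpow_add₀ hq0, zpow_one, hqmz, zpow_zero]
          ring
        · exact absurd rfl h
      by_cases h : ME q lam α β m i j = 0
      · rw [h]; ring
      · rw [hkey h]; field_simp [hd0 j]
    · -- K F K⁻¹ = q⁻¹ • F
      ext i j
      rw [hKinv, hMK]
      simp only [Matrix.mul_diagonal, Matrix.diagonal_mul, Matrix.smul_apply, smul_eq_mul]
      have hkey : ∀ h : MF α m i j ≠ 0, d i = q⁻¹ * d j := by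
        intro h
        simp only [MF, Matrix.of_apply] at h
        split_ifs at h with h1 h2
        · rw [hdval i, hdval j, show (-((i:ℕ):ℤ)) = (-1) + (-((j:ℕ):ℤ)) by omega,
            zpow_add₀ hq0, _root_.zpow_neg_one]
          ring
        · have hj := j.isLt
          rw [hdval i, hdval j, show (-((i:ℕ):ℤ)) = 0 by omega,
            show (-((j:ℕ):ℤ)) = 1 + (-(m:ℤ)) by omega,
            zpow_add₀ hq0, zpow_one, hqmz, zpow_zero]
          field_simp
        · exact absurd rfl h
      by_cases h : MF α m i j = 0
      · rw [h]; ring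
      · rw [hkey h]; field_simp [hd0 j, hq0]
    · -- E F - F E
      ext i j
      rw [hKinv, hMK, Matrix.diagonal_pow, Matrix.diagonal_pow, Matrix.diagonal_sub]
      rw [Matrix.sub_apply, Matrix.mul_apply, Matrix.mul_apply, Matrix.smul_apply,
        Matrix.diagonal_apply, smul_eq_mul]
      have hiLt := i.isLt
      have hjLt := j.isLt
      by_cases hij : i = j
      · subst hij
        rw [if_pos rfl]
        simp only [Pi.pow_apply]
        have hEF : ∑ k, ME q lam α β m i k * MF α m k i =
            (if (i:ℕ) = m-1 then β * α else cCoeff q lam α β ((i:ℕ)+1)) := by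
          by_cases him : (i:ℕ) = m - 1
          · rw [if_pos him, Finset.sum_eq_single (⟨0, by omega⟩ : Fin m)]
            · simp only [ME, MF, Matrix.of_apply, Fin.val_mk]
              split_ifs <;> first | ring1 | omega | tauto
            · intro b _ hb
              have hbv : (b:ℕ) ≠ 0 := fun h => hb (Fin.ext h)
              have hbLt := b.isLt
              simp only [ME, MF, Matrix.of_apply]
              split_ifs <;> first | ring1 | omega | tauto
            · intro h; exact absurd (Finset.mem_univ _) h
          · rw [if_neg him, Finset.sum_eq_single (⟨(i:ℕ)+1, by omega⟩ : Fin m)]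
            · simp only [ME, MF, Matrix.of_apply, Fin.val_mk]
              split_ifs <;> first | ring1 | omega | tauto
            · intro b _ hb
              have hbv : (b:ℕ) ≠ (i:ℕ)+1 := fun h => hb (Fin.ext h)
              have hbLt := b.isLt
              simp only [ME, MF, Matrix.of_apply]
              split_ifs <;> first | ring1 | omega | tauto
            · intro h; exact absurd (Finset.mem_univ _) h
        have hFE : ∑ k, MF α m i k * ME q lam α β m k i =
            (if (i:ℕ) = 0 then α * β else cCoeff q lam α β (i:ℕ)) := by
          by_cases hi0 : (i:ℕ) = 0
          · rw [if_pos hi0, Finset.sum_eq_single (⟨m-1, by omega⟩ : Fin m)]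
            · simp only [MF, ME, Matrix.of_apply, Fin.val_mk]
              split_ifs <;> first | ring1 | omega | tauto
            · intro b _ hb
              have hbv : (b:ℕ) ≠ m-1 := fun h => hb (Fin.ext h)
              have hbLt := b.isLt
              simp only [MF, ME, Matrix.of_apply]
              split_ifs <;> first | ring1 | omega | tauto
            · intro h; exact absurd (Finset.mem_univ _) h
          · rw [if_neg hi0, Finset.sum_eq_single (⟨(i:ℕ)-1, by omega⟩ : Fin m)]
            · simp only [MF, ME, Matrix.of_apply, Fin.val_mk]
              split_ifs <;> first | ring1 | omega | tauto
            · intro b _ hb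
              have hbv : (b:ℕ) ≠ (i:ℕ)-1 := fun h => hb (Fin.ext h)
              have hbLt := b.isLt
              simp only [MF, ME, Matrix.of_apply]
              split_ifs <;> first | ring1 | omega | tauto
            · intro h; exact absurd (Finset.mem_univ _) h
        rw [hEF, hFE, hdval i, ← cdiff q lam α β hq0 hqq hlam (i:ℕ)]
        by_cases hi0 : (i:ℕ) = 0
        · rw [if_neg (by omega), if_pos hi0, hi0, ← cCoeff_zero q lam α β]
        · by_cases him : (i:ℕ) = m-1
          · rw [if_pos him, if_neg hi0, him]
            have hba : β * α = cCoeff q lam α β ((m-1)+1) := by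
              rw [show m-1+1 = m by omega, cCoeff_m q lam α β m hqm]; ring
            rw [hba]
          · rw [if_neg him, if_neg hi0]
      · rw [if_neg hij]
        have hvne : (i:ℕ) ≠ (j:ℕ) := fun h => hij (Fin.ext h)
        have h1 : ∀ k ∈ Finset.univ, ME q lam α β m i k * MF α m k j = 0 := by
          intro k _
          have hkLt := k.isLt
          simp only [ME, MF, Matrix.of_apply]
          split_ifs <;> first | ring1 | omega | tauto
        have h2 : ∀ k ∈ Finset.univ, MF α m i k * ME q lam α β m k j = 0 := by
          intro k _
          have hkLt := k.isLt
          simp only [MF, ME, Matrix.of_apply]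
          split_ifs <;> first | ring1 | omega | tauto
        rw [Finset.sum_eq_zero h1, Finset.sum_eq_zero h2]
        simp
  · -- irreducibility
    have hq0 : q ≠ 0 := hq.ne_zero (by omega)
    set d : Fin m → ℂ := fun p => lam * q ^ (-((p:ℕ):ℤ)) with hdd
    have hMK : MK q lam m = Matrix.diagonal d := rfl
    have hdval : ∀ p : Fin m, d p = lam * q ^ (-((p:ℕ):ℤ)) := fun p => rfl
    have hdinj : ∀ i j : Fin m, d i = d j → i = j := by
      intro i j h
      rw [hdval, hdval] at h
      have h2 : q ^ (-((i:ℕ):ℤ)) = q ^ (-((j:ℕ):ℤ)) := mul_left_cancel₀ hlam h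
      rw [_root_.zpow_neg, _root_.zpow_neg, _root_.inv_inj, zpow_natCast, zpow_natCast] at h2
      exact Fin.ext (hq.pow_inj i.isLt j.isLt h2)
    clear_value d
    intro W hW
    obtain ⟨hWK, hWE, hWF⟩ := hW
    by_cases hbot : W = ⊥
    · exact Or.inl hbot
    right
    obtain ⟨w, hwW, hw0⟩ := Submodule.ne_bot_iff W |>.mp hbot
    obtain ⟨p0, hp0⟩ : ∃ p, w p ≠ 0 := Function.ne_iff.mp hw0
    -- the standard basis
    have hK_act : ∀ v : Fin m → ℂ, (MK q lam m).mulVec v = fun i => d i * v i := by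
      intro v; funext i; rw [hMK]; exact Matrix.mulVec_diagonal d v i
    -- applying polynomials in K
    have hprod : ∀ S : Finset (Fin m), (fun i => (∏ j ∈ S, (d i - d j)) * w i) ∈ W := by
      intro S
      induction S using Finset.induction_on with
      | empty => simpa using hwW
      | @insert a S ha ih =>
        have heq : (fun i => (∏ j ∈ insert a S, (d i - d j)) * w i) =
            (MK q lam m).mulVec (fun i => (∏ j ∈ S, (d i - d j)) * w i)
              - d a • (fun i => (∏ j ∈ S, (d i - d j)) * w i) := by
          funext i
          rw [hK_act]
          simp only [Pi.sub_apply, Pi.smul_apply, smul_eq_mul, Finset.prod_insert ha]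
          ring
        rw [heq]
        exact Submodule.sub_mem W (hWK _ ih) (Submodule.smul_mem W _ ih)
    have he_p0 : (Pi.single p0 1 : Fin m → ℂ) ∈ W := by
      have hc0 : (∏ j ∈ Finset.univ.erase p0, (d p0 - d j)) ≠ 0 := by
        rw [Finset.prod_ne_zero_iff]
        intro j hj
        exact sub_ne_zero.mpr fun h => (Finset.mem_erase.mp hj).1 (hdinj j p0 h.symm)
      have hu := hprod (Finset.univ.erase p0)
      have heq : (fun i => (∏ j ∈ Finset.univ.erase p0, (d i - d j)) * w i) =
          ((∏ j ∈ Finset.univ.erase p0, (d p0 - d j)) * w p0) • (Pi.single p0 1 : Fin m → ℂ) := by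
        funext i
        by_cases hip : i = p0
        · subst hip
          simp [Pi.single_apply]
        · rw [Finset.prod_eq_zero (Finset.mem_erase.mpr ⟨hip, Finset.mem_univ i⟩) (sub_self (d i))]
          simp [Pi.single_apply, hip]
      rw [heq] at hu
      have h2 := Submodule.smul_mem W ((∏ j ∈ Finset.univ.erase p0, (d p0 - d j)) * w p0)⁻¹ hu
      rwa [smul_smul, inv_mul_cancel₀ (mul_ne_zero hc0 hp0), one_smul] at h2
    -- E lowers the index
    have hEcol : ∀ (n : ℕ) (hn : n + 1 < m),
        (ME q lam α β m).mulVec ((Pi.single (⟨n+1, hn⟩ : Fin m) 1 : Fin m → ℂ)) = cCoeff q lam α β (n+1) • (Pi.single (⟨n, by omega⟩ : Fin m) 1 : Fin m → ℂ) := by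
      intro n hn
      rw [mulVecSingleOne]
      funext i
      have hiLt := i.isLt
      simp only [ME, Matrix.of_apply, Fin.val_mk, Pi.smul_apply, smul_eq_mul, Pi.single_apply]
      by_cases hi : (i:ℕ) = n
      · rw [if_pos (by omega), if_pos (show i = (⟨n, by omega⟩ : Fin m) from Fin.ext hi), mul_one]
      · have hne : i ≠ (⟨n, by omega⟩ : Fin m) := fun h => hi (by rw [h])
        rw [if_neg (by omega), if_neg (by omega), if_neg hne, mul_zero]
    -- F raises the index
    have hFcol : ∀ (n : ℕ) (hn : n + 1 < m),
        (MF α m).mulVec ((Pi.single (⟨n, by omega⟩ : Fin m) 1 : Fin m → ℂ)) = (Pi.single (⟨n+1, hn⟩ : Fin m) 1 : Fin m → ℂ) := by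
      intro n hn
      rw [mulVecSingleOne]
      funext i
      have hiLt := i.isLt
      simp only [MF, Matrix.of_apply, Fin.val_mk, Pi.single_apply]
      by_cases hi : (i:ℕ) = n+1
      · rw [if_pos (by omega), if_pos (show i = (⟨n+1, hn⟩ : Fin m) from Fin.ext hi)]
      · have hne : i ≠ (⟨n+1, hn⟩ : Fin m) := fun h => hi (by rw [h])
        rw [if_neg (by omega), if_neg (by omega), if_neg hne]
    have hdown : ∀ n : ℕ, ∀ hn : n < m, (Pi.single (⟨n, hn⟩ : Fin m) 1 : Fin m → ℂ) ∈ W → (Pi.single (⟨0, by omega⟩ : Fin m) 1 : Fin m → ℂ) ∈ W := by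
      intro n
      induction n with
      | zero => intro hn h; exact h
      | succ n ih =>
        intro hn h
        have h2 := hWE _ h
        rw [hEcol n hn] at h2
        have hcne : cCoeff q lam α β (n+1) ≠ 0 := hc (n+1) (by omega) (by omega)
        have h3 := Submodule.smul_mem W (cCoeff q lam α β (n+1))⁻¹ h2
        rw [smul_smul, inv_mul_cancel₀ hcne, one_smul] at h3
        exact ih (by omega) h3
    have hup : ∀ n : ℕ, ∀ hn : n < m, (Pi.single (⟨n, hn⟩ : Fin m) 1 : Fin m → ℂ) ∈ W := by
      intro n
      induction n with
      | zero => intro hn; exact hdown (p0:ℕ) p0.isLt he_p0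
      | succ n ih =>
        intro hn
        have h0 := ih (by omega)
        have h2 := hWF _ h0
        rwa [hFcol n hn] at h2
    -- conclude
    rw [Submodule.eq_top_iff']
    intro v
    have hv := pi_eq_sum_univ v
    rw [hv]
    refine Submodule.sum_mem _ fun i _ => Submodule.smul_mem _ _ ?_
    have h := hup (i:ℕ) i.isLt
    have heq : (fun j => if i = j then (1:ℂ) else 0) = (Pi.single i 1 : Fin m → ℂ) := by
      funext j
      simp [Pi.single_apply, eq_comm]
    rw [heq]
    exact h
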